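/- Let X_1, ..., X_m be independent exponential random variables with mean 1 and let α_1, ..., α_m > 0. Then for every non-negative integer p, E[(Σ_{j=1}^m α_j X_j)^p] = p! · h_p(α_1, ..., α_m), where h_p is the complete homogeneous symmetric polynomial of degree p. -/

import Mathlib

/-- The `l`-th complete homogeneous symmetric polynomial evaluated at the tuple `a`. -/
noncomputable def hsym {F : Type*} [CommSemiring F] {n : ℕ} (l : ℕ) (a : Fin n → F) : F :=
  ∑ f ∈ Finset.univ.filter (fun f : Fin l → Fin n => ∀ i j : Fin l, i ≤ j → f i ≤ f j),
    ∏ i, a (f i)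

open MeasureTheory ProbabilityTheory Real Set Finset
open scoped ENNReal NNReal

section Aux

lemma expo_integrable (k : ℕ) :
    Integrable (fun x : ℝ => (if 0 ≤ x then Real.exp (-x) else 0) * x ^ k) volume := by
  have h : (fun x : ℝ => (if 0 ≤ x then Real.exp (-x) else 0) * x ^ k)
      = Set.indicator (Set.Ici 0) (fun x => Real.exp (-x) * x ^ k) := by
    funext x
    by_cases hx : (0:ℝ) ≤ x <;> simp [Set.indicator, hx]
  rw [h]
  have h2 : IntegrableOn (fun x : ℝ => Real.exp (-x) * x ^ k) (Set.Ioi 0) volume := by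
    have := Real.GammaIntegral_convergent (s := (k : ℝ) + 1) (by positivity)
    have e : (fun x : ℝ => Real.exp (-x) * x ^ ((k : ℝ) + 1 - 1))
        = fun x : ℝ => Real.exp (-x) * x ^ k := by
      funext x
      rw [add_sub_cancel_right, Real.rpow_natCast]
    rwa [e] at this
  have h3 : IntegrableOn (fun x : ℝ => Real.exp (-x) * x ^ k) (Set.Ici 0) volume := by
    rwa [integrableOn_Ici_iff_integrableOn_Ioi]
  exact h3.integrable_indicator measurableSet_Ici

lemma expo_integral (k : ℕ) :
    ∫ x : ℝ, (if 0 ≤ x then Real.exp (-x) else 0) * x ^ k = (k.factorial : ℝ) := by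
  have h : (fun x : ℝ => (if 0 ≤ x then Real.exp (-x) else 0) * x ^ k)
      = Set.indicator (Set.Ici 0) (fun x => Real.exp (-x) * x ^ k) := by
    funext x
    by_cases hx : (0:ℝ) ≤ x <;> simp [Set.indicator, hx]
  rw [h, MeasureTheory.integral_indicator measurableSet_Ici,
    MeasureTheory.integral_Ici_eq_integral_Ioi]
  have := Real.Gamma_eq_integral (s := (k : ℝ) + 1) (by positivity)
  have e : (fun x : ℝ => Real.exp (-x) * x ^ ((k : ℝ) + 1 - 1))
      = fun x : ℝ => Real.exp (-x) * x ^ k := by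
    funext x
    rw [add_sub_cancel_right, Real.rpow_natCast]
  rw [e] at this
  rw [← this, Real.Gamma_nat_eq_factorial]

noncomputable def g0 : ℝ → ℝ := fun x => if 0 ≤ x then Real.exp (-x) else 0

lemma g0_nonneg (x : ℝ) : 0 ≤ g0 x := by
  unfold g0; split <;> positivity

lemma g0_meas : Measurable g0 := by
  unfold g0
  exact Measurable.ite measurableSet_Ici (by fun_prop) measurable_const

lemma density_eq : (fun x => ENNReal.ofReal (g0 x))
    = fun x => ((Real.toNNReal (g0 x)) : ℝ≥0∞) := rfl

section Moment
variable {Ω : Type*} [MeasureSpace Ω] (Y : Ω → ℝ) (hY : Measurable Y)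
  (hexp : Measure.map Y volume =
    volume.withDensity fun x => ENNReal.ofReal (if 0 ≤ x then Real.exp (-x) else 0))

include hY hexp in
lemma moment_integrable (k : ℕ) : Integrable (fun ω => Y ω ^ k) volume := by
  have hmg : AEStronglyMeasurable (fun x : ℝ => x ^ k) (Measure.map Y volume) :=
    (by fun_prop : Measurable fun x : ℝ => x ^ k).aestronglyMeasurable
  have := (integrable_map_measure hmg hY.aemeasurable).mp ?_
  · exact this
  rw [hexp]
  show Integrable (fun x : ℝ => x ^ k) (volume.withDensity fun x => ENNReal.ofReal (g0 x))
  rw [density_eq]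
  rw [integrable_withDensity_iff_integrable_smul (g0_meas.real_toNNReal)]
  have e : (fun x : ℝ => Real.toNNReal (g0 x) • x ^ k) = fun x => g0 x * x ^ k := by
    funext x
    simp [NNReal.smul_def, Real.coe_toNNReal _ (g0_nonneg x)]
  rw [e]
  exact expo_integrable k

include hY hexp in
lemma moment_integral (k : ℕ) : ∫ ω, Y ω ^ k = (k.factorial : ℝ) := by
  have h0 : ∫ ω, Y ω ^ k = ∫ x, x ^ k ∂(Measure.map Y volume) := by
    rw [integral_map hY.aemeasurable
      (by fun_prop : Measurable fun x : ℝ => x ^ k).aestronglyMeasurable]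
  rw [h0, hexp]
  show ∫ x, x ^ k ∂(volume.withDensity fun x => ENNReal.ofReal (g0 x)) = _
  rw [density_eq, integral_withDensity_eq_integral_smul (g0_meas.real_toNNReal)]
  have e : (fun x : ℝ => Real.toNNReal (g0 x) • x ^ k) = fun x => g0 x * x ^ k := by
    funext x
    simp [NNReal.smul_def, Real.coe_toNNReal _ (g0_nonneg x)]
  calc ∫ x, Real.toNNReal (g0 x) • x ^ k = ∫ x, g0 x * x ^ k := by rw [e]
  _ = (k.factorial : ℝ) := expo_integral k

end Moment

section Prod
variable {Ω : Type*} [MeasureSpace Ω]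
    (hprob : IsProbabilityMeasure (volume : Measure Ω))
    {m : ℕ} (X : Fin m → Ω → ℝ) (hmeas : ∀ j, Measurable (X j))
    (hindep : iIndepFun X volume)
    (hint : ∀ j k, Integrable (fun ω => X j ω ^ k) volume)
    (hmom : ∀ j k, ∫ ω, X j ω ^ k = (k.factorial : ℝ))

include hprob hmeas hindep hint hmom in
lemma prod_moment (c : Fin m → ℕ) (s : Finset (Fin m)) :
    Integrable (fun ω => ∏ j ∈ s, X j ω ^ c j) volume ∧
      ∫ ω, ∏ j ∈ s, X j ω ^ c j = ∏ j ∈ s, ((c j).factorial : ℝ) := by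
  classical
  set Y : Fin m → Ω → ℝ := fun j ω => X j ω ^ c j with hYdef
  have hYmeas : ∀ j, Measurable (Y j) := fun j => (hmeas j).pow_const (c j)
  have hYindep : iIndepFun Y volume :=
    hindep.comp (fun j x => x ^ c j) (fun j => measurable_id.pow_const (c j))
  induction s using Finset.induction_on with
  | empty => simpa using integrable_const (1 : ℝ)
  | insert i s hi ih =>
    have hprod : (fun ω => ∏ j ∈ s, X j ω ^ c j) = ∏ j ∈ s, Y j := by
      funext ω; rw [Finset.prod_apply]
    have hIndep : IndepFun (∏ j ∈ s, Y j) (Y i) volume :=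
      hYindep.indepFun_finsetProd_of_notMem hYmeas hi
    have h1 : Integrable (∏ j ∈ s, Y j) volume := by rw [← hprod]; exact ih.1
    have h2 : Integrable (Y i) volume := hint i (c i)
    have hmul : Integrable ((∏ j ∈ s, Y j) * Y i) volume := hIndep.integrable_mul h1 h2
    have hmul' : (fun ω => ∏ j ∈ insert i s, X j ω ^ c j)
        = (∏ j ∈ s, Y j) * Y i := by
      funext ω
      rw [Finset.prod_insert hi]
      simp [Pi.mul_apply, Finset.prod_apply, hYdef, mul_comm]
    constructor
    · rw [hmul']; exact hmul
    · rw [hmul', Finset.prod_insert hi]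
      have := hIndep.integral_mul_eq_mul_integral h1.aestronglyMeasurable h2.aestronglyMeasurable
      rw [show (∫ ω, ((∏ j ∈ s, Y j) * Y i) ω) = (∫ ω, (∏ j ∈ s, Y j) ω) * ∫ ω, Y i ω
        from this]
      rw [← hprod]
      rw [ih.2, hmom i (c i)]
      ring

end Prod

lemma fiber_card {p m : ℕ} (f : Fin p → Fin m) :
    (((Finset.univ.filter (fun g : Fin p → Fin m => Monotone g)) ×ˢ
        (Finset.univ : Finset (Equiv.Perm (Fin p)))).filter
      (fun gs => gs.1 ∘ gs.2 = f)).card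
    = ∏ j : Fin m, ((Finset.univ.filter fun i => f i = j).card).factorial := by
  classical
  set τ : Equiv.Perm (Fin p) := Tuple.sort f with hτ
  have key : ∀ (g : Fin p → Fin m) (σ : Equiv.Perm (Fin p)),
      Monotone g → g ∘ σ = f → g = f ∘ τ := by
    intro g σ hg hgs
    have hg' : g = f ∘ ⇑σ⁻¹ := by
      funext x
      have := congrFun hgs (σ⁻¹ x)
      simpa using this
    have hmono : Monotone (f ∘ ⇑σ⁻¹) := hg' ▸ hg
    have := (Tuple.comp_sort_eq_comp_iff_monotone (f := f) (σ := σ⁻¹)).mpr hmono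
    rw [hg', this, hτ]
  have hcard : (((Finset.univ.filter (fun g : Fin p → Fin m => Monotone g)) ×ˢ
        (Finset.univ : Finset (Equiv.Perm (Fin p)))).filter
      (fun gs => gs.1 ∘ gs.2 = f)).card
      = (Finset.univ.filter (fun σ : Equiv.Perm (Fin p) => f ∘ σ = f)).card := by
    apply Finset.card_bij' (i := fun gs _ => gs.2⁻¹ * τ⁻¹)
      (j := fun σ' _ => (f ∘ τ, τ⁻¹ * σ'⁻¹))
    · intro gs hgs
      simp only [Finset.mem_filter, Finset.mem_product, Finset.mem_univ, and_true,
        true_and] at hgs ⊢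
      obtain ⟨hmono, hcomp⟩ := hgs
      have hg : gs.1 = f ∘ τ := key gs.1 gs.2 hmono hcomp
      funext x
      have h1 : f (gs.2⁻¹ (τ⁻¹ x)) = gs.1 (τ⁻¹ x) := by
        have := congrFun hcomp (gs.2⁻¹ (τ⁻¹ x))
        simpa using this.symm
      simp only [Function.comp_apply, Equiv.Perm.mul_apply, h1, hg,
        Function.comp_apply]
      simp
    · intro σ' hσ'
      simp only [Finset.mem_filter, Finset.mem_univ, true_and] at hσ'
      simp only [Finset.mem_filter, Finset.mem_product, Finset.mem_univ, and_true, true_and]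
      constructor
      · rw [hτ]; exact Tuple.monotone_sort f
      · funext x
        have : f (σ'⁻¹ x) = f x := by
          have := congrFun hσ' (σ'⁻¹ x)
          simpa using this.symm
        simpa [Equiv.Perm.mul_apply] using this
    · intro gs hgs
      simp only [Finset.mem_filter, Finset.mem_product, Finset.mem_univ, and_true,
        true_and] at hgs
      obtain ⟨hmono, hcomp⟩ := hgs
      have hg : gs.1 = f ∘ τ := key gs.1 gs.2 hmono hcomp
      ext <;> simp [hg, mul_assoc]
    · intro σ' hσ'
      simp [mul_assoc]
  rw [hcard]
  have h1 : (Finset.univ.filter (fun σ : Equiv.Perm (Fin p) => f ∘ σ = f)).card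
      = Fintype.card {σ : Equiv.Perm (Fin p) // f ∘ σ = f} := (Fintype.card_subtype _).symm
  rw [h1, DomMulAct.stabilizer_card f]
  exact Finset.prod_congr rfl fun j _ => by rw [Fintype.card_subtype]

lemma comb {p m : ℕ} (α : Fin m → ℝ) :
    ∑ f : Fin p → Fin m,
      ((∏ j : Fin m, ((Finset.univ.filter fun i => f i = j).card).factorial : ℕ) : ℝ)
        * ∏ i, α (f i)
    = (p.factorial : ℝ) * hsym p α := by
  classical
  set M : Finset (Fin p → Fin m) := Finset.univ.filter (fun g => Monotone g) with hM
  have hMeq : hsym p α = ∑ g ∈ M, ∏ i, α (g i) := by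
    rw [hsym, hM]
    apply Finset.sum_congr _ (fun _ _ => rfl)
    apply Finset.filter_congr
    intro g _
    constructor
    · intro h a b hab; exact h a b hab
    · intro h a b hab; exact h hab
  calc ∑ f : Fin p → Fin m,
      ((∏ j : Fin m, ((Finset.univ.filter fun i => f i = j).card).factorial : ℕ) : ℝ)
        * ∏ i, α (f i)
      = ∑ f : Fin p → Fin m,
        (((M ×ˢ (Finset.univ : Finset (Equiv.Perm (Fin p)))).filter
          (fun gs => gs.1 ∘ gs.2 = f)).card : ℝ) * ∏ i, α (f i) := by
        refine Finset.sum_congr rfl fun f _ => ?_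
        rw [fiber_card f]
    _ = ∑ f : Fin p → Fin m,
        ∑ _gs ∈ (M ×ˢ (Finset.univ : Finset (Equiv.Perm (Fin p)))).filter
          (fun gs => gs.1 ∘ gs.2 = f), ∏ i, α (f i) := by
        refine Finset.sum_congr rfl fun f _ => ?_
        rw [Finset.sum_const, nsmul_eq_mul]
    _ = ∑ f : Fin p → Fin m,
        ∑ gs ∈ (M ×ˢ (Finset.univ : Finset (Equiv.Perm (Fin p)))).filter
          (fun gs => gs.1 ∘ gs.2 = f), ∏ i, α ((gs.1 ∘ gs.2) i) := by
        refine Finset.sum_congr rfl fun f _ => Finset.sum_congr rfl fun gs hgs => ?_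
        rw [Finset.mem_filter] at hgs
        rw [hgs.2]
    _ = ∑ gs ∈ M ×ˢ (Finset.univ : Finset (Equiv.Perm (Fin p))),
        ∏ i, α ((gs.1 ∘ gs.2) i) := by
        exact Finset.sum_fiberwise_of_maps_to (fun gs _ => Finset.mem_univ _) _
    _ = ∑ g ∈ M, ∑ σ : Equiv.Perm (Fin p), ∏ i, α (g (σ i)) := by
        rw [Finset.sum_product]; rfl
    _ = ∑ g ∈ M, ∑ _σ : Equiv.Perm (Fin p), ∏ i, α (g i) := by
        refine Finset.sum_congr rfl fun g _ => Finset.sum_congr rfl fun σ _ => ?_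
        exact Equiv.prod_comp σ (fun i => α (g i))
    _ = (p.factorial : ℝ) * hsym p α := by
        rw [hMeq]
        simp [Finset.sum_const, Fintype.card_perm, Finset.mul_sum]

end Aux

/-- If `X_1, …, X_m` are i.i.d. mean-1 exponential random variables and `α_j > 0`,
then `E[(∑_j α_j X_j)^p] = p! h_p(α)`. -/
theorem stmt12 {Ω : Type*} [MeasureSpace Ω]
    (hprob : IsProbabilityMeasure (volume : Measure Ω))
    (m : ℕ) (hm : 2 ≤ m) (X : Fin m → Ω → ℝ) (hmeas : ∀ j, Measurable (X j))
    (hindep : iIndepFun X volume)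
    (hexp : ∀ j, Measure.map (X j) volume =
      volume.withDensity fun x => ENNReal.ofReal (if 0 ≤ x then Real.exp (-x) else 0))
    (α : Fin m → ℝ) (hα : ∀ j, 0 < α j) (p : ℕ) :
    ∫ ω, (∑ j : Fin m, α j * X j ω) ^ p = (p.factorial : ℝ) * hsym p α := by
  classical
  have hint : ∀ j k, Integrable (fun ω => X j ω ^ k) volume :=
    fun j k => moment_integrable (X j) (hmeas j) (hexp j) k
  have hmom : ∀ j k, ∫ ω, X j ω ^ k = (k.factorial : ℝ) :=
    fun j k => moment_integral (X j) (hmeas j) (hexp j) k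
  -- count function
  set c : (Fin p → Fin m) → Fin m → ℕ :=
    fun f j => (Finset.univ.filter fun i => f i = j).card with hc
  -- pointwise expansion
  have hexpand : ∀ ω, (∑ j : Fin m, α j * X j ω) ^ p
      = ∑ f : Fin p → Fin m, (∏ i, α (f i)) * ∏ j, X j ω ^ c f j := by
    intro ω
    rw [Fintype.sum_pow (fun j => α j * X j ω) p]
    refine Finset.sum_congr rfl fun f _ => ?_
    rw [Finset.prod_mul_distrib]
    congr 1
    rw [← Finset.prod_fiberwise_of_maps_to (g := f) (fun i _ => Finset.mem_univ (f i))
      (fun i => X (f i) ω)]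
    refine Finset.prod_congr rfl fun j _ => ?_
    rw [Finset.prod_congr rfl (fun i hi => by
      rw [Finset.mem_filter] at hi
      rw [hi.2] : ∀ i ∈ Finset.univ.filter fun i => f i = j, X (f i) ω = X j ω)]
    rw [Finset.prod_const]
  have hfun : (fun ω => (∑ j : Fin m, α j * X j ω) ^ p)
      = fun ω => ∑ f : Fin p → Fin m, (∏ i, α (f i)) * ∏ j, X j ω ^ c f j :=
    funext hexpand
  rw [hfun]
  rw [integral_finset_sum _ (fun f _ =>
    ((prod_moment hprob X hmeas hindep hint hmom (c f) Finset.univ).1).const_mul _)]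
  have hterm : ∀ f : Fin p → Fin m,
      ∫ ω, (∏ i, α (f i)) * ∏ j, X j ω ^ c f j
        = (∏ i, α (f i)) * ∏ j, ((c f j).factorial : ℝ) := by
    intro f
    rw [MeasureTheory.integral_const_mul, (prod_moment hprob X hmeas hindep hint hmom (c f) Finset.univ).2]
  rw [Finset.sum_congr rfl (fun f _ => hterm f)]
  rw [← comb α]
  refine Finset.sum_congr rfl fun f _ => ?_
  rw [mul_comm]
  congr 1
  push_cast
  rfl
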